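/- If G is a connected signed digraph with n vertices that is not a signed cycle, then there exists a degree-bounded finite dynamical system f on G such that f^(n+1) is a constant function. -/

import Mathlib

open scoped Classical

/-- A signed digraph on vertex set `V`: for each ordered pair of vertices there may be
a positive arc and/or a negative arc. -/
structure SDigraph (V : Type) where
  pos : V → V → Bool
  neg : V → V → Bool

namespace SDigraph

variable {V : Type}

/-- There is an arc (of some sign) from `a` to `b` (the underlying unsigned digraph). -/
def arc (G : SDigraph V) (a b : V) : Prop := G.pos a b = true ∨ G.neg a b = true

/-- Out-degree: positive and negative arcs are counted separately. -/
def outdeg [Fintype V] (G : SDigraph V) (i : V) : ℕ :=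
  (Finset.univ.filter fun j => G.pos i j = true).card +
  (Finset.univ.filter fun j => G.neg i j = true).card

/-- In-degree: positive and negative arcs are counted separately. -/
def indeg [Fintype V] (G : SDigraph V) (i : V) : ℕ :=
  (Finset.univ.filter fun j => G.pos j i = true).card +
  (Finset.univ.filter fun j => G.neg j i = true).card

/-- The symmetrized adjacency relation (for weak connectivity). -/
def wconnRel (G : SDigraph V) (a b : V) : Prop := G.arc a b ∨ G.arc b a

/-- `G` is (weakly) connected. -/
def Connected (G : SDigraph V) : Prop :=
  ∀ a b : V, Relation.ReflTransGen (wconnRel G) a b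

/-- Directed reachability. -/
def Reach (G : SDigraph V) : V → V → Prop := Relation.ReflTransGen G.arc

/-- Out-degree in the underlying unsigned digraph. -/
noncomputable def underOutdeg [Fintype V] (G : SDigraph V) (i : V) : ℕ :=
  (Finset.univ.filter fun j => G.arc i j).card

/-- In-degree in the underlying unsigned digraph. -/
noncomputable def underIndeg [Fintype V] (G : SDigraph V) (i : V) : ℕ :=
  (Finset.univ.filter fun j => G.arc j i).card

/-- `G` is a signed cycle: the underlying digraph is a directed cycle
(every vertex has exactly one out- and one in-neighbour and the graph is connected
and nonempty) and there are no parallel arcs. -/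
def IsSignedCycleGraph [Fintype V] (G : SDigraph V) : Prop :=
  0 < Fintype.card V ∧ Connected G ∧
  (∀ a b : V, ¬(G.pos a b = true ∧ G.neg a b = true)) ∧
  (∀ i : V, underOutdeg G i = 1) ∧
  (∀ i : V, underIndeg G i = 1)

/-- `steps G m a b`: there is a directed walk of length `m` from `a` to `b`. -/
def steps (G : SDigraph V) : ℕ → V → V → Prop
  | 0 => fun a b => a = b
  | m + 1 => fun a b => ∃ c, G.arc a c ∧ steps G m c b

/-- Directed distance from `a` to `b`, `⊤` if `b` is not reachable from `a`. -/
noncomputable def dist (G : SDigraph V) (a b : V) : ℕ∞ :=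
  sInf {x : ℕ∞ | ∃ m : ℕ, steps G m a b ∧ x = (m : ℕ∞)}

/-- The strong component containing `a`, as a finite set of vertices. -/
noncomputable def scc [Fintype V] (G : SDigraph V) (a : V) : Finset V :=
  Finset.univ.filter fun b => Reach G a b ∧ Reach G b a

/-- The strong component of `a` is initial: no arc enters it from outside. -/
def Initial [Fintype V] (G : SDigraph V) (a : V) : Prop :=
  ∀ b c : V, b ∈ scc G a → G.arc c b → c ∈ scc G a

/-- `λ(G) = max_i min_{initial strong component I} (d_G(I,i) + |I|)`. -/
noncomputable def lam [Fintype V] (G : SDigraph V) : ℕ∞ :=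
  Finset.univ.sup fun i : V =>
    (Finset.univ.filter fun a : V => Initial G a).inf fun a =>
      (scc G a).inf (fun b => dist G b i) + ((scc G a).card : ℕ∞)

/-- `G` is basic: all its initial strong components are trivial
(a single vertex with no loop). -/
def Basic [Fintype V] (G : SDigraph V) : Prop :=
  ∀ a : V, Initial G a → (scc G a).card = 1 ∧ ¬ G.arc a a

/-- The (weakly) connected component containing `a`. -/
noncomputable def component [Fintype V] (G : SDigraph V) (a : V) : Finset V :=
  Finset.univ.filter fun b => Relation.ReflTransGen (wconnRel G) a b

/-- The subgraph induced by a set `S` of vertices. -/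
def induce (G : SDigraph V) (S : Finset V) : SDigraph {x : V // x ∈ S} :=
  ⟨fun a b => G.pos a.1 b.1, fun a b => G.neg a.1 b.1⟩

/-- `v` (with arc signs `s`) is a directed cycle of `G` on `m+1` distinct vertices:
for each `t` there is an arc of sign `s t` from `v t` to `v (t+1)` (cyclically). -/
def IsSignedCycleOn (G : SDigraph V) (m : ℕ)
    (v : Fin (m + 1) → V) (s : Fin (m + 1) → Bool) : Prop :=
  Function.Injective v ∧
  ∀ t : Fin (m + 1),
    if s t then G.pos (v t) (v (t + 1)) = true else G.neg (v t) (v (t + 1)) = true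

/-- `G` has a directed cycle (signs ignored). -/
def HasCycle (G : SDigraph V) : Prop :=
  ∃ (m : ℕ) (v : Fin (m + 1) → V), Function.Injective v ∧
    ∀ t : Fin (m + 1), G.arc (v t) (v (t + 1))

/-- Number of negative arcs in a sign pattern. -/
def negCount {m : ℕ} (s : Fin (m + 1) → Bool) : ℕ :=
  (Finset.univ.filter fun t => s t = false).card

/-- `G` has a positive cycle. -/
def HasPositiveCycle (G : SDigraph V) : Prop :=
  ∃ (m : ℕ) (v : Fin (m + 1) → V) (s : Fin (m + 1) → Bool),
    IsSignedCycleOn G m v s ∧ negCount s % 2 = 0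

/-- `G` has a negative cycle. -/
def HasNegativeCycle (G : SDigraph V) : Prop :=
  ∃ (m : ℕ) (v : Fin (m + 1) → V) (s : Fin (m + 1) → Bool),
    IsSignedCycleOn G m v s ∧ negCount s % 2 = 1

end SDigraph

/-- A finite dynamical system with components indexed by `V`: each `X i` is a
nonempty finite interval of integers and `f` maps `X = ∏ X i` into itself. -/
structure FDS (V : Type) where
  X : V → Finset ℤ
  nonempty : ∀ i, (X i).Nonempty
  interval : ∀ i, ∀ a ∈ X i, ∀ b ∈ X i, ∀ c : ℤ, a ≤ c → c ≤ b → c ∈ X i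
  f : (V → ℤ) → V → ℤ
  maps : ∀ x, (∀ i, x i ∈ X i) → ∀ i, f x i ∈ X i

namespace FDS

variable {V : Type}

/-- `x` is a state of the system, i.e. `x ∈ X`. -/
def mem (F : FDS V) (x : V → ℤ) : Prop := ∀ i, x i ∈ F.X i

/-- `G` is the interaction graph of `F`: there is a positive (negative) arc from
`j` to `i` iff increasing `x j` by one can strictly increase (decrease) `f _ i`. -/
def onGraph [DecidableEq V] (F : FDS V) (G : SDigraph V) : Prop :=
  (∀ j i, G.pos j i = true ↔ ∃ x, F.mem x ∧ x j + 1 ∈ F.X j ∧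
      F.f x i < F.f (Function.update x j (x j + 1)) i) ∧
  (∀ j i, G.neg j i = true ↔ ∃ x, F.mem x ∧ x j + 1 ∈ F.X j ∧
      F.f (Function.update x j (x j + 1)) i < F.f x i)

/-- `F` is degree-bounded with respect to `G`. -/
def degreeBounded [Fintype V] (F : FDS V) (G : SDigraph V) : Prop :=
  ∀ i, (G.outdeg i = 0 ∧ 0 < G.indeg i → (F.X i).card = 2) ∧
    (¬(G.outdeg i = 0 ∧ 0 < G.indeg i) → (F.X i).card ≤ G.outdeg i + 1)

/-- Fixed points of `F`. -/
def IsFixed (F : FDS V) (x : V → ℤ) : Prop := F.mem x ∧ F.f x = x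

/-- `F` is nilpotent: some iterate is constant on `X`. -/
def Nilpotent (F : FDS V) : Prop :=
  ∃ k : ℕ, 1 ≤ k ∧ ∃ c, ∀ x, F.mem x → F.f^[k] x = c

/-- `F` converges toward `H` in `k` steps:
`f^k(X) ⊆ h(Y) ⊆ Y ⊆ X` and `f = h` on `Y`. -/
def ConvergesToward (F H : FDS V) (k : ℕ) : Prop :=
  (∀ i, H.X i ⊆ F.X i) ∧
  (∀ x, F.mem x → ∃ y, H.mem y ∧ F.f^[k] x = H.f y) ∧
  (∀ x, H.mem x → F.f x = H.f x)

end FDS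


/-! ### Construction -/

namespace S0

open Finset

variable {n : ℕ}

/-- There is an arc of sign `s` from `j` to `i`. -/
def Arc (G : SDigraph (Fin n)) (j i : Fin n) (s : Bool) : Prop :=
  (if s then G.pos j i else G.neg j i) = true

lemma arc_of_Arc {G : SDigraph (Fin n)} {j i : Fin n} {s : Bool} (h : Arc G j i s) :
    G.arc j i := by
  cases s
  · exact Or.inr h
  · exact Or.inl h

lemma Arc_of_pos {G : SDigraph (Fin n)} {j i : Fin n} (h : G.pos j i = true) :
    Arc G j i true := h

lemma Arc_of_neg {G : SDigraph (Fin n)} {j i : Fin n} (h : G.neg j i = true) :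
    Arc G j i false := h

lemma arc_iff_Arc {G : SDigraph (Fin n)} {j i : Fin n} :
    G.arc j i ↔ ∃ s, Arc G j i s := by
  constructor
  · rintro (h | h)
    · exact ⟨true, h⟩
    · exact ⟨false, h⟩
  · rintro ⟨s, h⟩; exact arc_of_Arc h

/-- counting helper: disjoint witnesses bound outdegree -/
lemma le_outdeg (G : SDigraph (Fin n)) (j : Fin n) (A B : Finset (Fin n))
    (hA : ∀ a ∈ A, G.pos j a = true) (hB : ∀ b ∈ B, G.neg j b = true) :
    A.card + B.card ≤ G.outdeg j := by
  unfold SDigraph.outdeg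
  gcongr
  · intro a ha; simp [hA a ha]
  · intro b hb; simp [hB b hb]

lemma one_le_outdeg {G : SDigraph (Fin n)} {j i : Fin n} {s : Bool} (h : Arc G j i s) :
    1 ≤ G.outdeg j := by
  cases s
  · simpa using le_outdeg G j ∅ {i} (by simp) (by simpa [Arc] using h)
  · simpa using le_outdeg G j {i} ∅ (by simpa [Arc] using h) (by simp)

lemma two_le_outdeg_of_double {G : SDigraph (Fin n)} {j i : Fin n}
    (h1 : G.pos j i = true) (h2 : G.neg j i = true) : 2 ≤ G.outdeg j := by
  simpa using le_outdeg G j {i} {i} (by simpa using h1) (by simpa using h2)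

lemma indeg_pos_iff {G : SDigraph (Fin n)} {i : Fin n} :
    0 < G.indeg i ↔ ∃ j s, Arc G j i s := by
  unfold SDigraph.indeg
  constructor
  · intro h
    by_cases hp : (Finset.univ.filter fun j => G.pos j i = true).Nonempty
    · obtain ⟨j, hj⟩ := hp
      exact ⟨j, true, by simpa [Arc] using (Finset.mem_filter.mp hj).2⟩
    · have : (Finset.univ.filter fun j => G.pos j i = true).card = 0 := by
        simpa [Finset.card_eq_zero, Finset.not_nonempty_iff_eq_empty] using hp
      rw [this, Nat.zero_add] at h
      obtain ⟨j, hj⟩ := Finset.card_pos.mp h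
      exact ⟨j, false, by simpa [Arc] using (Finset.mem_filter.mp hj).2⟩
  · rintro ⟨j, s, h⟩
    cases s
    · have : j ∈ Finset.univ.filter fun j => G.neg j i = true := by
        simp [Arc] at h; simp [h]
      have := Finset.card_pos.mpr ⟨j, this⟩
      omega
    · have : j ∈ Finset.univ.filter fun j => G.pos j i = true := by
        simp [Arc] at h; simp [h]
      have := Finset.card_pos.mpr ⟨j, this⟩
      omega

/-- The size parameter: `X i = Icc 0 (M i)`. -/
noncomputable def Mv (G : SDigraph (Fin n)) (i : Fin n) : ℕ :=
  if 0 < G.outdeg i ∨ 0 < G.indeg i then max (G.outdeg i) 1 else 0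

lemma Mv_ge_one_of_out {G : SDigraph (Fin n)} {j i : Fin n} {s : Bool} (h : Arc G j i s) :
    1 ≤ Mv G j := by
  have h1 := one_le_outdeg h
  unfold Mv
  rw [if_pos (Or.inl (by omega : 0 < G.outdeg j))]
  omega

lemma Mv_ge_one_of_in {G : SDigraph (Fin n)} {j i : Fin n} {s : Bool} (h : Arc G j i s) :
    1 ≤ Mv G i := by
  have h1 : 0 < G.indeg i := indeg_pos_iff.mpr ⟨j, s, h⟩
  unfold Mv
  rw [if_pos (Or.inr h1)]
  omega

lemma Mv_eq_outdeg {G : SDigraph (Fin n)} {i : Fin n} (h : 1 ≤ G.outdeg i) :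
    Mv G i = G.outdeg i := by
  unfold Mv
  rw [if_pos (Or.inl (by omega : 0 < G.outdeg i))]
  omega

/-- Role of a vertex in the construction plan. -/
inductive PK (n : ℕ) where
  | root : PK n
  | gad (u : Fin n) (win : Bool) : PK n
  | nor (p : Fin n) (ps : Bool) : PK n
deriving DecidableEq

/-- A construction plan for the FDS on `G`. -/
structure Plan (G : SDigraph (Fin n)) where
  kind : Fin n → PK n
  rank : Fin n → ℕ
  rank_one : ∀ i, 1 ≤ rank i
  rank_le : ∀ i, rank i ≤ n + 1
  hroot : ∀ i, kind i = PK.root → ∀ j s, ¬ Arc G j i s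
  hnor : ∀ i p ps, kind i = PK.nor p ps → Arc G p i ps ∧ rank p < rank i
  hgad2 : ∀ i u w, kind i = PK.gad u w → 2 ≤ rank i
  hwin : ∀ i u, kind i = PK.gad u true → G.pos u i = true ∧ G.neg u i = true
  hsingle : ∀ i u, kind i = PK.gad u false →
      (G.pos u i = true ∨ G.neg u i = true) ∧
      ¬ (G.pos u i = true ∧ G.neg u i = true) ∧ 2 ≤ G.outdeg u
  hcompat : ∀ i i' u w w', kind i = PK.gad u w → kind i' = PK.gad u w' → w = w'

namespace Plan

variable {G : SDigraph (Fin n)} (P : Plan G)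

/-- `u` is the source of some gadget. -/
def isSrc (u : Fin n) : Prop := ∃ w win, P.kind w = PK.gad u win

/-- `u` is the source of a window gadget. -/
def isWin (u : Fin n) : Prop := ∃ w, P.kind w = PK.gad u true

lemma isSrc_outdeg {u : Fin n} (h : P.isSrc u) : 2 ≤ G.outdeg u := by
  obtain ⟨w, win, hw⟩ := h
  cases win
  · exact (P.hsingle w u hw).2.2
  · obtain ⟨h1, h2⟩ := P.hwin w u hw
    exact two_le_outdeg_of_double h1 h2

/-- Capacity of vertex `u`. -/
noncomputable def KK (u : Fin n) : ℤ := (Mv G u : ℤ) - (if P.isSrc u then 1 else 0)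

/-- Value-skipping remap (skips the value `1` for window-gadget sources). -/
noncomputable def ψ (u : Fin n) (v : ℤ) : ℤ := if P.isWin u ∧ 1 ≤ v then v + 1 else v

lemma ψ_mono {u : Fin n} : StrictMono (P.ψ u) := by
  intro a b hab
  unfold ψ
  by_cases hw : P.isWin u
  · simp only [hw, true_and]
    split <;> split <;> omega
  · simp only [hw, false_and, if_false]
    omega

lemma ψ_zero (u : Fin n) : P.ψ u 0 = 0 := by unfold ψ; split <;> omega

lemma ψ_nonneg {u : Fin n} {v : ℤ} (h : 0 ≤ v) : 0 ≤ P.ψ u v := by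
  unfold ψ; split <;> omega

lemma ψ_ne_one {u : Fin n} (h : P.isWin u) (v : ℤ) : P.ψ u v ≠ 1 := by
  unfold ψ
  split
  · omega
  · rename_i hc
    rw [not_and_or] at hc
    rcases hc with hc | hc
    · exact absurd h hc
    · omega

/-- auxiliary recursion computing the orientation `dir`. -/
noncomputable def dirAux : ℕ → Fin n → Bool
  | 0, _ => true
  | (fuel + 1), i =>
    match P.kind i with
    | PK.root => true
    | PK.gad u win => if win then true else G.pos u i
    | PK.nor p ps =>
        if 1 ≤ P.ψ p (if dirAux fuel p then 0 else P.KK p) then !ps else ps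

lemma dirAux_stable : ∀ f1 : ℕ, ∀ i : Fin n, ∀ f2 : ℕ,
    P.rank i ≤ f1 → P.rank i ≤ f2 → P.dirAux f1 i = P.dirAux f2 i := by
  intro f1
  induction f1 using Nat.strong_induction_on with
  | _ f1 ih =>
    intro i f2 h1 h2
    have hr := P.rank_one i
    obtain ⟨g1, rfl⟩ : ∃ g, f1 = g + 1 := ⟨f1 - 1, by omega⟩
    obtain ⟨g2, rfl⟩ : ∃ g, f2 = g + 1 := ⟨f2 - 1, by omega⟩
    show P.dirAux (g1+1) i = P.dirAux (g2+1) i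
    unfold dirAux
    cases hk : P.kind i with
    | root => simp
    | gad u win => simp
    | nor p ps =>
      simp only
      have hrp : P.rank p < P.rank i := (P.hnor i p ps hk).2
      have e1 : P.dirAux g1 p = P.dirAux g2 p :=
        ih g1 (by omega) p g2 (by omega) (by omega)
      rw [e1]

/-- The orientation of a vertex. -/
noncomputable def dir (i : Fin n) : Bool := P.dirAux (P.rank i) i

/-- The final (settled) value of a vertex. -/
noncomputable def σv (i : Fin n) : ℤ := P.ψ i (if P.dir i then 0 else P.KK i)

lemma dir_root {i : Fin n} (h : P.kind i = PK.root) : P.dir i = true := by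
  have hr := P.rank_one i
  obtain ⟨g, hg⟩ : ∃ g, P.rank i = g + 1 := ⟨P.rank i - 1, by omega⟩
  unfold dir
  rw [hg]
  unfold dirAux
  rw [h]

lemma dir_gad {i u : Fin n} {win : Bool} (h : P.kind i = PK.gad u win) :
    P.dir i = if win then true else G.pos u i := by
  have hr := P.rank_one i
  obtain ⟨g, hg⟩ : ∃ g, P.rank i = g + 1 := ⟨P.rank i - 1, by omega⟩
  unfold dir
  rw [hg]
  unfold dirAux
  rw [h]

lemma dir_nor {i p : Fin n} {ps : Bool} (h : P.kind i = PK.nor p ps) :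
    P.dir i = if 1 ≤ P.σv p then !ps else ps := by
  have hr := P.rank_one i
  obtain ⟨g, hg⟩ : ∃ g, P.rank i = g + 1 := ⟨P.rank i - 1, by omega⟩
  unfold dir
  rw [hg]
  unfold dirAux
  rw [h]
  simp only [σv, dir]
  have hrp : P.rank p < P.rank i := (P.hnor i p ps h).2
  rw [P.dirAux_stable g p (P.rank p) (by omega) le_rfl]
  rfl

end Plan


section Formula

variable {G : SDigraph (Fin n)} (P : Plan G)

/-- Both arcs from `j` to `i` are present. -/
def Gd (G : SDigraph (Fin n)) (j i : Fin n) : Prop :=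
  G.pos j i = true ∧ G.neg j i = true

namespace Plan

lemma ψ_ge (u : Fin n) (v : ℤ) : v ≤ P.ψ u v := by unfold ψ; split <;> omega

/-- threshold level of the arc `(j,i,s)`. -/
noncomputable def lvl (j i : Fin n) (s : Bool) : ℤ :=
  if P.kind i = PK.gad j false then (Mv G j : ℤ)
  else if Gd G j i then (if s = P.dir i then 1 else 2) else 1

/-- the literal of arc `(j,i,s)` at state `x`. -/
noncomputable def lit (j i : Fin n) (s : Bool) (x : Fin n → ℤ) : ℤ :=
  if s = P.dir i then (if P.lvl j i s ≤ x j then 1 else 0)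
  else 1 - (if P.lvl j i s ≤ x j then 1 else 0)

/-- in-arcs of `i`. -/
noncomputable def InA (i : Fin n) : Finset (Fin n × Bool) :=
  Finset.univ.filter fun a => Arc G a.1 i a.2

noncomputable def core (i : Fin n) (x : Fin n → ℤ) : ℤ :=
  ∏ a ∈ InA (G := G) i, P.lit a.1 i a.2 x

noncomputable def bse (i : Fin n) : ℤ := if P.dir i then 0 else P.KK i

/-- The local map of the constructed FDS. -/
noncomputable def fF (i : Fin n) (x : Fin n → ℤ) : ℤ :=
  if P.kind i = PK.root then 0
  else P.ψ i (P.bse i + (if P.dir i then 1 else -1) * P.core i x)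

lemma lit01 (j i : Fin n) (s : Bool) (x : Fin n → ℤ) :
    P.lit j i s x = 0 ∨ P.lit j i s x = 1 := by
  unfold lit; split <;> split <;> omega

lemma prod01' {α : Type*} (s : Finset α) (f : α → ℤ) (h : ∀ a ∈ s, f a = 0 ∨ f a = 1) :
    s.prod f = 0 ∨ s.prod f = 1 := by
  induction s using Finset.cons_induction with
  | empty => simp
  | cons a s ha ih =>
    rw [Finset.prod_cons]
    rcases h a (Finset.mem_cons_self a s) with h0 | h1
    · rw [h0]; simp
    · rw [h1, one_mul]
      exact ih fun b hb => h b (Finset.mem_cons_of_mem hb)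

lemma core01 (i : Fin n) (x : Fin n → ℤ) : P.core i x = 0 ∨ P.core i x = 1 :=
  prod01' _ _ fun a _ => P.lit01 a.1 i a.2 x

lemma Mv_src {i : Fin n} (h : P.isSrc i) : 2 ≤ Mv G i := by
  have h2 := P.isSrc_outdeg h
  rw [Mv_eq_outdeg (by omega)]
  omega

lemma KK_nonneg (i : Fin n) : 0 ≤ P.KK i := by
  unfold KK
  split
  · rename_i h
    have := P.Mv_src h
    push_cast
    omega
  · have : (0:ℤ) ≤ (Mv G i : ℤ) := Int.ofNat_nonneg _
    omega

lemma nonroot_in {i : Fin n} (h : P.kind i ≠ PK.root) : ∃ j s, Arc G j i s := by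
  cases hk : P.kind i with
  | root => exact absurd hk h
  | gad u win =>
    cases win
    · rcases (P.hsingle i u hk).1 with hp | hn
      · exact ⟨u, true, hp⟩
      · exact ⟨u, false, hn⟩
    · exact ⟨u, true, (P.hwin i u hk).1⟩
  | nor p ps => exact ⟨p, ps, (P.hnor i p ps hk).1⟩

lemma KK_one {i : Fin n} (h : ∃ j s, Arc G j i s) : 1 ≤ P.KK i := by
  obtain ⟨j, s, hjs⟩ := h
  unfold KK
  by_cases hs : P.isSrc i
  · have h2 := P.isSrc_outdeg hs
    have := Mv_eq_outdeg (G := G) (i := i) (by omega)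
    rw [if_pos hs, this]
    push_cast
    omega
  · rw [if_neg hs]
    have := Mv_ge_one_of_in hjs
    push_cast
    omega

lemma KK_le (i : Fin n) : P.KK i ≤ (Mv G i : ℤ) := by
  unfold KK; split <;> omega

lemma KK_win {i : Fin n} (h : P.isWin i) : P.KK i = (Mv G i : ℤ) - 1 := by
  unfold KK
  rw [if_pos ⟨h.choose, true, h.choose_spec⟩]

lemma not_win_of_single {u w : Fin n} (hw : P.kind w = PK.gad u false) : ¬ P.isWin u := by
  rintro ⟨w', hw'⟩
  exact Bool.noConfusion (P.hcompat w' w u true false hw' hw)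

lemma fF_bounds (i : Fin n) (x : Fin n → ℤ) : 0 ≤ P.fF i x ∧ P.fF i x ≤ (Mv G i : ℤ) := by
  unfold fF
  split
  · constructor
    · rfl
    · positivity
  · rename_i hroot
    have hK : 1 ≤ P.KK i := P.KK_one (P.nonroot_in hroot)
    have hc := P.core01 i x
    set v : ℤ := P.bse i + (if P.dir i then 1 else -1) * P.core i x with hv
    have hv0 : 0 ≤ v ∧ v ≤ P.KK i := by
      unfold v
      unfold bse
      split <;> rcases hc with h | h <;> rw [h] <;> omega
    constructor
    · exact P.ψ_nonneg hv0.1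
    · unfold ψ
      split
      · rename_i hcond
        have := P.KK_win hcond.1
        omega
      · have := P.KK_le i
        omega

lemma σv_bounds (i : Fin n) : 0 ≤ P.σv i ∧ P.σv i ≤ (Mv G i : ℤ) := by
  have hKn := P.KK_nonneg i
  have hKl := P.KK_le i
  unfold σv
  constructor
  · apply P.ψ_nonneg
    split
    · rfl
    · exact hKn
  · by_cases hdir : P.dir i
    · rw [if_pos hdir, P.ψ_zero]
      positivity
    · rw [if_neg hdir]
      unfold ψ
      split
      · rename_i hcnd
        have h1 := P.KK_win hcnd.1
        omega
      · omega

lemma img_single {u : Fin n} (h : ∃ w, P.kind w = PK.gad u false) (x : Fin n → ℤ) :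
    P.fF u x ≤ (Mv G u : ℤ) - 1 := by
  obtain ⟨w, hw⟩ := h
  have hnw : ¬ P.isWin u := P.not_win_of_single hw
  have hsrc : P.isSrc u := ⟨w, false, hw⟩
  have hM : Mv G u = G.outdeg u := Mv_eq_outdeg (by have := P.isSrc_outdeg hsrc; omega)
  have hKK : P.KK u = (Mv G u : ℤ) - 1 := by unfold KK; rw [if_pos hsrc]
  unfold fF
  split
  · have := P.isSrc_outdeg hsrc
    rw [hM]
    push_cast
    omega
  · rename_i hroot
    have hc := P.core01 u x
    have hK1 : 1 ≤ P.KK u := P.KK_one (P.nonroot_in hroot)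
    have hψ : ∀ v : ℤ, P.ψ u v = v := by
      intro v; unfold ψ
      rw [if_neg (by tauto)]
    rw [hψ]
    unfold bse
    split <;> rcases hc with h | h <;> rw [h] <;> omega

lemma img_win {u : Fin n} (h : P.isWin u) (x : Fin n → ℤ) : P.fF u x ≠ 1 := by
  unfold fF
  split
  · omega
  · exact P.ψ_ne_one h _

lemma img_nonneg (u : Fin n) (x : Fin n → ℤ) : 0 ≤ P.fF u x := (P.fF_bounds u x).1

/-- trigger parents of doubles settle at `0` or `≥ 2`. -/
lemma σv_nor_double {p i : Fin n} {ps : Bool} (hk : P.kind i = PK.nor p ps)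
    (hd : Gd G p i) : P.σv p = 0 ∨ 2 ≤ P.σv p := by
  unfold σv
  by_cases hdir : P.dir p
  · left; rw [if_pos hdir, P.ψ_zero]
  · right
    rw [if_neg hdir]
    have hge := P.ψ_ge p (P.KK p)
    have h2 : 2 ≤ P.KK p := by
      have hMd : 2 ≤ G.outdeg p := two_le_outdeg_of_double hd.1 hd.2
      unfold KK
      by_cases hs : P.isSrc p
      · rw [if_pos hs]
        obtain ⟨w, win, hw⟩ := hs
        have hwi : w ≠ i := by
          intro he; rw [he, hk] at hw; exact nomatch hw
        have h3 : 3 ≤ G.outdeg p := by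
          have harc : G.pos p w = true ∨ G.neg p w = true := by
            cases win
            · rcases (P.hsingle w p hw).1 with h' | h'
              · exact Or.inl h'
              · exact Or.inr h'
            · exact Or.inl (P.hwin w p hw).1
          rcases harc with h' | h'
          · have := le_outdeg G p {i, w} {i} (by
              intro a ha
              rcases Finset.mem_insert.mp ha with rfl | ha
              · exact hd.1
              · rw [Finset.mem_singleton.mp ha]; exact h')
              (by intro b hb; rw [Finset.mem_singleton.mp hb]; exact hd.2)
            rw [Finset.card_insert_of_notMem (by simpa using hwi.symm)] at this
            simpa using this
          · have := le_outdeg G p {i} {i, w} (by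
              intro a ha; rw [Finset.mem_singleton.mp ha]; exact hd.1)
              (by
              intro b hb
              rcases Finset.mem_insert.mp hb with rfl | hb
              · exact hd.2
              · rw [Finset.mem_singleton.mp hb]; exact h')
            rw [Finset.card_insert_of_notMem (by simpa using hwi.symm)] at this
            simpa using this
        have := Mv_eq_outdeg (G := G) (i := p) (by omega)
        rw [this]
        push_cast
        omega
      · rw [if_neg hs]
        rw [Mv_eq_outdeg (G := G) (i := p) (by omega)]
        push_cast
        omega
    omega

end Plan

end Formula


section Settle

variable {G : SDigraph (Fin n)} (P : Plan G)

namespace Plan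

lemma gad_ne_gad_false {u : Fin n} : PK.gad u true ≠ PK.gad (n := n) u false := by
  intro h
  exact Bool.noConfusion (by injection h)

lemma mem_InA {j i : Fin n} {s : Bool} : (j, s) ∈ InA (G := G) i ↔ Arc G j i s := by
  unfold InA
  simp

lemma fF_eq_σv_of_core_zero {i : Fin n} (hroot : P.kind i ≠ PK.root)
    (y : Fin n → ℤ) (hc : P.core i y = 0) : P.fF i y = P.σv i := by
  unfold fF
  rw [if_neg hroot, hc, mul_zero, add_zero]
  rfl

/-- gadget vertices settle as soon as the gadget source is inside its image range. -/
lemma fF_gad {i u : Fin n} {win : Bool} (hk : P.kind i = PK.gad u win)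
    (y : Fin n → ℤ) (hy0 : 0 ≤ y u)
    (hyA : win = true → y u ≠ 1)
    (hyB : win = false → y u ≤ (Mv G u : ℤ) - 1) :
    P.fF i y = P.σv i := by
  have hroot : P.kind i ≠ PK.root := by rw [hk]; exact fun h => nomatch h
  apply P.fF_eq_σv_of_core_zero hroot
  cases win with
  | true =>
    have hd : Gd G u i := ⟨(P.hwin i u hk).1, (P.hwin i u hk).2⟩
    have hdir : P.dir i = true := by rw [P.dir_gad hk]; rfl
    have hne : P.kind i ≠ PK.gad u false := by rw [hk]; exact gad_ne_gad_false
    have hy1 := hyA rfl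
    rcases lt_or_ge (y u) 1 with hcase | hcase
    · apply Finset.prod_eq_zero (i := (u, true)) (mem_InA.mpr hd.1)
      show P.lit u i true y = 0
      have hlvl : P.lvl u i true = 1 := by
        unfold lvl
        rw [if_neg hne, if_pos hd, hdir, if_pos rfl]
      unfold lit
      rw [hlvl, hdir, if_pos rfl, if_neg (by omega)]
    · apply Finset.prod_eq_zero (i := (u, false)) (mem_InA.mpr hd.2)
      show P.lit u i false y = 0
      have hy2 : 2 ≤ y u := by omega
      have hlvl : P.lvl u i false = 2 := by
        unfold lvl
        rw [if_neg hne, if_pos hd, hdir, if_neg (by simp)]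
      unfold lit
      rw [hlvl, hdir, if_neg (by simp), if_pos (by omega)]
      norm_num
  | false =>
    obtain ⟨hor, hnand, hdeg⟩ := P.hsingle i u hk
    have hdir : P.dir i = G.pos u i := by
      rw [P.dir_gad hk]
      exact if_neg (by simp)
    have harc : Arc G u i (P.dir i) := by
      rw [hdir]
      cases hp : G.pos u i
      · rcases hor with h | h
        · exact absurd h (by rw [hp]; exact fun h => Bool.noConfusion h)
        · exact h
      · exact hp
    apply Finset.prod_eq_zero (i := (u, P.dir i)) (mem_InA.mpr harc)
    show P.lit u i (P.dir i) y = 0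
    have hyB' := hyB rfl
    have hlvl : P.lvl u i (P.dir i) = (Mv G u : ℤ) := by
      unfold lvl
      rw [if_pos hk]
    unfold lit
    rw [hlvl, if_pos rfl, if_neg (by omega)]

/-- normal vertices settle one step after their parent. -/
lemma fF_nor {i p : Fin n} {ps : Bool} (hk : P.kind i = PK.nor p ps)
    (y : Fin n → ℤ) (hyp : y p = P.σv p) : P.fF i y = P.σv i := by
  have hroot : P.kind i ≠ PK.root := by rw [hk]; exact fun h => nomatch h
  apply P.fF_eq_σv_of_core_zero hroot
  have harc : Arc G p i ps := (P.hnor i p ps hk).1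
  have hne : P.kind i ≠ PK.gad p false := by rw [hk]; exact fun h => nomatch h
  have hdir := P.dir_nor hk
  apply Finset.prod_eq_zero (i := (p, ps)) (mem_InA.mpr harc)
  show P.lit p i ps y = 0
  by_cases h1 : 1 ≤ P.σv p
  · have hdir' : P.dir i = !ps := by rw [hdir, if_pos h1]
    have hps : ¬ (ps = P.dir i) := by rw [hdir']; cases ps <;> simp
    have hlow : P.lvl p i ps ≤ P.σv p := by
      unfold lvl
      rw [if_neg hne]
      by_cases hd : Gd G p i
      · rw [if_pos hd, if_neg hps]
        rcases P.σv_nor_double hk hd with h | h <;> omega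
      · rw [if_neg hd]; omega
    unfold lit
    rw [if_neg hps, hyp, if_pos hlow]
    norm_num
  · have h0 : P.σv p = 0 := by
      have := (P.σv_bounds p).1
      omega
    have hdir' : P.dir i = ps := by rw [hdir, if_neg h1]
    have hpos : 1 ≤ P.lvl p i ps := by
      unfold lvl
      rw [if_neg hne]
      split
      · split <;> omega
      · omega
    unfold lit
    rw [if_pos hdir'.symm, hyp, h0, if_neg (by omega)]

lemma fF_root {i : Fin n} (hk : P.kind i = PK.root) (y : Fin n → ℤ) :
    P.fF i y = P.σv i := by
  unfold fF
  rw [if_pos hk]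
  unfold σv
  rw [P.dir_root hk]
  rw [if_pos rfl, P.ψ_zero]

/-- the main convergence lemma. -/
lemma settle (x : Fin n → ℤ) : ∀ r : ℕ, ∀ i : Fin n, P.rank i = r →
    ∀ k, r ≤ k → (fun z j => P.fF j z)^[k] x i = P.σv i := by
  intro r
  induction r using Nat.strong_induction_on with
  | _ r ih =>
    intro i hri k hk
    have h1 := P.rank_one i
    cases hkind : P.kind i with
    | root =>
      obtain ⟨m, rfl⟩ : ∃ m, k = m + 1 := ⟨k - 1, by omega⟩
      rw [Function.iterate_succ_apply']
      exact P.fF_root hkind _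
    | gad u win =>
      have h2 := P.hgad2 i u win hkind
      obtain ⟨m, rfl⟩ : ∃ m, k = m + 2 := ⟨k - 2, by omega⟩
      rw [Function.iterate_succ_apply']
      have hyu : ((fun z j => P.fF j z)^[m+1] x) u
          = P.fF u ((fun z j => P.fF j z)^[m] x) := by
        rw [Function.iterate_succ_apply']
      apply P.fF_gad hkind
      · rw [hyu]; exact P.img_nonneg u _
      · intro hw
        rw [hyu]
        apply P.img_win
        exact ⟨i, by rw [← hw]; exact hkind⟩
      · intro hw
        rw [hyu]
        apply P.img_single
        exact ⟨i, by rw [← hw]; exact hkind⟩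
    | nor p ps =>
      obtain ⟨m, rfl⟩ : ∃ m, k = m + 1 := ⟨k - 1, by omega⟩
      rw [Function.iterate_succ_apply']
      apply P.fF_nor hkind
      have hrp : P.rank p < P.rank i := (P.hnor i p ps hkind).2
      exact ih (P.rank p) (by omega) p rfl m (by omega)

end Plan

end Settle


section Witness

variable {G : SDigraph (Fin n)} (P : Plan G)

namespace Plan

lemma arc_sign_unique {p i : Fin n} {s : Bool} (h : Arc G p i s) (hnd : ¬ Gd G p i) :
    s = G.pos p i := by
  cases s
  · cases hp : G.pos p i
    · rfl
    · exact absurd ⟨hp, h⟩ hnd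
  · exact h.symm

lemma not_gad_false_of_Gd {p i : Fin n} (hd : Gd G p i) : P.kind i ≠ PK.gad p false := by
  intro hk
  exact (P.hsingle i p hk).2.1 hd

lemma lvl_bounds {p i : Fin n} {s : Bool} (h : Arc G p i s) :
    1 ≤ P.lvl p i s ∧ P.lvl p i s ≤ (Mv G p : ℤ) := by
  unfold lvl
  split
  · rename_i hk
    have hd := (P.hsingle i p hk).2.2
    have hM : Mv G p = G.outdeg p := Mv_eq_outdeg (by omega)
    have : 2 ≤ Mv G p := by omega
    constructor
    · push_cast; omega
    · exact le_refl _
  · split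
    · rename_i hd
      have h2 := two_le_outdeg_of_double hd.1 hd.2
      have hM : Mv G p = G.outdeg p := Mv_eq_outdeg (by omega)
      have h3 : 2 ≤ Mv G p := by omega
      constructor
      · split <;> omega
      · split <;> (push_cast; omega)
    · have := Mv_ge_one_of_out h
      constructor
      · exact le_refl _
      · push_cast; omega

/-- the canonical "all literals 1" context value of source `p` for target `i`. -/
noncomputable def val (i p : Fin n) : ℤ :=
  if Gd G p i then 1
  else if Arc G p i (G.pos p i) then
    (if (G.pos p i) = P.dir i then P.lvl p i (G.pos p i) else P.lvl p i (G.pos p i) - 1)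
  else 0

lemma val_bounds (i p : Fin n) : 0 ≤ P.val i p ∧ P.val i p ≤ (Mv G p : ℤ) := by
  unfold val
  split
  · rename_i hd
    have h2 := two_le_outdeg_of_double hd.1 hd.2
    have hM : Mv G p = G.outdeg p := Mv_eq_outdeg (by omega)
    have h3 : 2 ≤ Mv G p := by omega
    constructor
    · norm_num
    · push_cast; omega
  · split
    · rename_i ha
      have := P.lvl_bounds ha
      split <;> omega
    · constructor
      · rfl
      · positivity

/-- literal of any in-arc evaluates to 1 at the canonical context. -/
lemma lit_val {i p : Fin n} {s : Bool} (ha : Arc G p i s) (x : Fin n → ℤ)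
    (hx : x p = P.val i p) : P.lit p i s x = 1 := by
  unfold lit
  by_cases hd : Gd G p i
  · have hx1 : x p = 1 := by rw [hx]; unfold val; rw [if_pos hd]
    have hlvl : P.lvl p i s = if s = P.dir i then 1 else 2 := by
      unfold lvl
      rw [if_neg (P.not_gad_false_of_Gd hd), if_pos hd]
    rw [hlvl, hx1]
    by_cases hs : s = P.dir i
    · rw [if_pos hs, if_pos hs, if_pos (by omega)]
    · rw [if_neg hs, if_neg hs, if_neg (by omega)]
      norm_num
  · have hs := arc_sign_unique ha hd
    have ha' : Arc G p i (G.pos p i) := by rw [← hs]; exact ha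
    have hx1 : x p = if (G.pos p i) = P.dir i then P.lvl p i (G.pos p i)
        else P.lvl p i (G.pos p i) - 1 := by
      rw [hx]; unfold val; rw [if_neg hd, if_pos ha']
    rw [← hs] at hx1
    by_cases hps : s = P.dir i
    · rw [if_pos hps] at hx1 ⊢
      rw [hx1]
      split <;> omega
    · rw [if_neg hps] at hx1 ⊢
      rw [hx1]
      split <;> omega

/-- the partner literal of a double stays 1 near the crossing of the other. -/
lemma lit_partner {i j : Fin n} {s : Bool} (hd : Gd G j i) (x : Fin n → ℤ)
    (hx : P.lvl j i s - 1 ≤ x j ∧ x j ≤ P.lvl j i s) :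
    P.lit j i (!s) x = 1 := by
  have hlvl : ∀ t : Bool, P.lvl j i t = if t = P.dir i then 1 else 2 := by
    intro t
    unfold lvl
    rw [if_neg (P.not_gad_false_of_Gd hd), if_pos hd]
  unfold lit
  rw [hlvl] at hx
  rw [hlvl]
  by_cases hs : s = P.dir i
  · have hns : ¬ ((!s) = P.dir i) := by rw [← hs]; cases s <;> simp
    rw [if_pos hs] at hx
    rw [if_neg hns, if_neg hns, if_neg (by omega)]
    norm_num
  · have hns : (!s) = P.dir i := by
      cases s <;> cases hdd : P.dir i <;> simp_all
    rw [if_neg hs] at hx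
    rw [if_pos hns, if_pos hns, if_pos (by omega)]

/-- kind of a vertex with an in-arc is not root. -/
lemma not_root_of_in {i j : Fin n} {s : Bool} (ha : Arc G j i s) : P.kind i ≠ PK.root := by
  intro hk
  exact P.hroot i hk j s ha

/-- The witness for each arc of `G`. -/
lemma witness {j i : Fin n} {s : Bool} (ha : Arc G j i s) :
    ∃ x : Fin n → ℤ, (∀ p, 0 ≤ x p ∧ x p ≤ (Mv G p : ℤ)) ∧
      x j + 1 ≤ (Mv G j : ℤ) ∧
      (if s then P.fF i x < P.fF i (Function.update x j (x j + 1))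
       else P.fF i (Function.update x j (x j + 1)) < P.fF i x) := by
  classical
  have hlb := P.lvl_bounds ha
  set x : Fin n → ℤ := fun p => if p = j then P.lvl j i s - 1 else P.val i p with hxdef
  have hxj : x j = P.lvl j i s - 1 := by simp [hxdef]
  have hxp : ∀ p, p ≠ j → x p = P.val i p := by
    intro p hp; simp [hxdef, hp]
  set x' := Function.update x j (x j + 1) with hx'def
  have hx'j : x' j = P.lvl j i s := by
    rw [hx'def, Function.update_self, hxj]; ring
  have hx'p : ∀ p, p ≠ j → x' p = P.val i p := by
    intro p hp
    rw [hx'def, Function.update_of_ne hp]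
    exact hxp p hp
  have hmem : ∀ p, 0 ≤ x p ∧ x p ≤ (Mv G p : ℤ) := by
    intro p
    by_cases hp : p = j
    · subst hp; rw [hxj]; omega
    · rw [hxp p hp]; exact P.val_bounds i p
  have hstep : x j + 1 ≤ (Mv G j : ℤ) := by rw [hxj]; omega
  refine ⟨x, hmem, hstep, ?_⟩
  have hroot := P.not_root_of_in ha
  have hmemA : (j, s) ∈ InA (G := G) i := mem_InA.mpr ha
  have hothers : ∀ z : Fin n → ℤ,
      (P.lvl j i s - 1 ≤ z j ∧ z j ≤ P.lvl j i s) → (∀ p, p ≠ j → z p = P.val i p) →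
      ∀ b ∈ InA (G := G) i, b ≠ (j, s) → P.lit b.1 i b.2 z = 1 := by
    intro z hzj hzp b hb hbne
    obtain ⟨p, t⟩ := b
    have hbarc : Arc G p i t := mem_InA.mp hb
    by_cases hp : p = j
    · subst hp
      have ht : t = !s := by
        cases t <;> cases s <;> simp_all
      subst ht
      have hd : Gd G p i := by
        cases s
        · exact ⟨hbarc, ha⟩
        · exact ⟨ha, hbarc⟩
      exact P.lit_partner hd z hzj
    · exact P.lit_val hbarc z (hzp p hp)
  have hcx : P.core i x = P.lit j i s x :=
    Finset.prod_eq_single_of_mem _ hmemA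
      (fun b hb hbne => hothers x (by rw [hxj]; omega) hxp b hb hbne)
  have hcx' : P.core i x' = P.lit j i s x' :=
    Finset.prod_eq_single_of_mem _ hmemA
      (fun b hb hbne => hothers x' (by rw [hx'j]; omega) hx'p b hb hbne)
  have hth1 : ¬ (P.lvl j i s ≤ x j) := by rw [hxj]; omega
  have hth2 : P.lvl j i s ≤ x' j := by rw [hx'j]
  have hlx : P.lit j i s x = if s = P.dir i then 0 else 1 := by
    unfold lit
    rw [if_neg hth1]
    split <;> norm_num
  have hlx' : P.lit j i s x' = if s = P.dir i then 1 else 0 := by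
    unfold lit
    rw [if_pos hth2]
    split <;> norm_num
  have harg : ∀ z : Fin n → ℤ,
      P.fF i z = P.ψ i (P.bse i + (if P.dir i then 1 else -1) * P.core i z) := by
    intro z; unfold fF; rw [if_neg hroot]
  have hψ := P.ψ_mono (u := i)
  have hK : 1 ≤ P.KK i := P.KK_one ⟨j, s, ha⟩
  rw [harg x, harg x', hcx, hcx', hlx, hlx']
  unfold bse
  cases s <;> by_cases hdd : P.dir i = true
  all_goals simp only [hdd, Bool.false_eq_true, Bool.true_eq_false, if_true, if_false,
    Bool.not_eq_true] at *
  all_goals first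
    | (simp only [if_true, if_false]; apply hψ; omega)
    | (simp only [eq_self_iff_true, if_true, if_false]; apply hψ; omega)
    | (norm_num; apply hψ; omega)
    | (apply hψ; omega)

end Plan

end Witness


section Structural

variable {G : SDigraph (Fin n)} (P : Plan G)

namespace Plan

lemma lit_depends {p i : Fin n} {t : Bool} {x y : Fin n → ℤ} (h : x p = y p) :
    P.lit p i t x = P.lit p i t y := by
  unfold lit
  rw [h]

lemma thr_same {L v : ℤ} (h : L ≠ v + 1) :
    (if L ≤ v + 1 then (1:ℤ) else 0) = (if L ≤ v then 1 else 0) := by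
  by_cases hle : L ≤ v
  · rw [if_pos (by omega), if_pos hle]
  · rw [if_neg (by omega), if_neg hle]

lemma lit_step_same {j i : Fin n} {t : Bool} {x : Fin n → ℤ}
    (h : P.lvl j i t ≠ x j + 1) :
    P.lit j i t (Function.update x j (x j + 1)) = P.lit j i t x := by
  unfold lit
  rw [Function.update_self, thr_same h]

/-- converse direction: any strict sensitivity corresponds to an arc of the right sign. -/
lemma structural (j i : Fin n) (x : Fin n → ℤ) :
    (P.fF i x < P.fF i (Function.update x j (x j + 1)) → G.pos j i = true) ∧
    (P.fF i (Function.update x j (x j + 1)) < P.fF i x → G.neg j i = true) := by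
  classical
  set x' := Function.update x j (x j + 1) with hx'def
  by_cases hroot : P.kind i = PK.root
  · constructor <;> (intro h; unfold fF at h; rw [if_pos hroot, if_pos hroot] at h; omega)
  by_cases hc : ∃ t, (j, t) ∈ InA (G := G) i ∧ P.lvl j i t = x j + 1
  swap
  · -- no literal changes
    have hcore : P.core i x' = P.core i x := by
      apply Finset.prod_congr rfl
      intro b hb
      obtain ⟨p, t⟩ := b
      by_cases hp : p = j
      · subst hp
        exact P.lit_step_same (fun h => hc ⟨t, hb, h⟩)
      · exact P.lit_depends (Function.update_of_ne hp _ _)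
    constructor <;> intro h <;> exfalso <;> unfold fF at h <;>
      rw [if_neg hroot, if_neg hroot, hcore] at h <;> exact lt_irrefl _ h
  · obtain ⟨t0, hmem0, hlvl0⟩ := hc
    have harc0 : Arc G j i t0 := mem_InA.mp hmem0
    -- the rest of the product is unchanged
    have hRsame : ∀ b ∈ (InA (G := G) i).erase (j, t0),
        P.lit b.1 i b.2 x' = P.lit b.1 i b.2 x := by
      intro b hb
      obtain ⟨hbne, hbmem⟩ := Finset.mem_erase.mp hb
      obtain ⟨p, t⟩ := b
      by_cases hp : j = p
      · subst hp
        have ht : t = !t0 := by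
          cases t <;> cases t0 <;> simp_all
        have harct : Arc G j i t := mem_InA.mp hbmem
        have hd : Gd G j i := by
          cases t0
          · refine ⟨?_, harc0⟩
            rw [ht] at harct
            exact harct
          · refine ⟨harc0, ?_⟩
            rw [ht] at harct
            exact harct
        have hkne := P.not_gad_false_of_Gd hd
        have hform : ∀ u : Bool, P.lvl j i u = if u = P.dir i then 1 else 2 := by
          intro u
          unfold lvl
          rw [if_neg hkne, if_pos hd]
        apply P.lit_step_same
        rw [hform, ← hlvl0, hform]
        subst ht
        cases t0 <;> by_cases hdd : P.dir i = true <;> simp [hdd] <;> omega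
      · exact P.lit_depends (Function.update_of_ne (fun h => hp h.symm) _ _)
    set R : ℤ := ∏ b ∈ (InA (G := G) i).erase (j, t0), P.lit b.1 i b.2 x with hRdef
    have hR01 : R = 0 ∨ R = 1 := prod01' _ _ (fun b _ => P.lit01 b.1 i b.2 x)
    have hcx : P.core i x = P.lit j i t0 x * R := (Finset.mul_prod_erase _ _ hmem0).symm
    have hcx' : P.core i x' = P.lit j i t0 x' * R := by
      have h1 : P.core i x' = P.lit j i t0 x' *
          ∏ b ∈ (InA (G := G) i).erase (j, t0), P.lit b.1 i b.2 x' :=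
        (Finset.mul_prod_erase _ _ hmem0).symm
      rw [h1, hRdef]
      congr 1
      exact Finset.prod_congr rfl hRsame
    have hth1 : ¬ (P.lvl j i t0 ≤ x j) := by omega
    have hth2 : P.lvl j i t0 ≤ x' j := by
      rw [hx'def, Function.update_self]
      omega
    have hlx : P.lit j i t0 x = if t0 = P.dir i then 0 else 1 := by
      unfold lit
      rw [if_neg hth1]
      split <;> norm_num
    have hlx' : P.lit j i t0 x' = if t0 = P.dir i then 1 else 0 := by
      unfold lit
      rw [if_pos hth2]
      split <;> norm_num
    have hψ := P.ψ_mono (u := i)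
    have harg : ∀ z : Fin n → ℤ,
        P.fF i z = P.ψ i (P.bse i + (if P.dir i then 1 else -1) * P.core i z) := by
      intro z; unfold fF; rw [if_neg hroot]
    constructor
    · intro h
      rw [harg, harg] at h
      have hAB := hψ.lt_iff_lt.mp h
      rw [hcx, hcx', hlx, hlx'] at hAB
      have ht0 : t0 = true := by
        by_contra hne
        have : t0 = false := by cases t0 <;> simp_all
        subst this
        rcases hR01 with hR | hR <;> by_cases hdd : P.dir i = true <;>
          unfold bse at hAB <;> simp [hdd, hR] at hAB <;> omega
      rw [ht0] at harc0
      exact harc0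
    · intro h
      rw [harg, harg] at h
      have hAB := hψ.lt_iff_lt.mp h
      rw [hcx, hcx', hlx, hlx'] at hAB
      have ht0 : t0 = false := by
        by_contra hne
        have : t0 = true := by cases t0 <;> simp_all
        subst this
        rcases hR01 with hR | hR <;> by_cases hdd : P.dir i = true <;>
          unfold bse at hAB <;> simp [hdd, hR] at hAB <;> omega
      rw [ht0] at harc0
      exact harc0

end Plan

end Structural


section Assemble

variable {G : SDigraph (Fin n)} (P : Plan G)

namespace Plan

/-- The constructed FDS. -/
noncomputable def mkF : FDS (Fin n) where
  X := fun i => Finset.Icc 0 ((Mv G i : ℤ))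
  nonempty := fun i => ⟨0, Finset.mem_Icc.mpr ⟨le_refl 0, by positivity⟩⟩
  interval := by
    intro i a ha b hb c h1 h2
    rw [Finset.mem_Icc] at *
    omega
  f := fun x i => P.fF i x
  maps := by
    intro x hx i
    rw [Finset.mem_Icc]
    exact P.fF_bounds i x

lemma mem_mkF (x : Fin n → ℤ) :
    (P.mkF).mem x ↔ ∀ p, 0 ≤ x p ∧ x p ≤ (Mv G p : ℤ) := by
  unfold FDS.mem mkF
  simp [Finset.mem_Icc]

lemma degree_mkF : (P.mkF).degreeBounded G := by
  intro i
  have hcard : ((P.mkF).X i).card = Mv G i + 1 := by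
    show (Finset.Icc (0:ℤ) ((Mv G i : ℤ))).card = Mv G i + 1
    rw [Int.card_Icc]
    omega
  constructor
  · rintro ⟨h0, hin⟩
    rw [hcard]
    unfold Mv
    rw [if_pos (Or.inr hin), h0]
    rfl
  · intro hne
    rw [hcard]
    by_cases h1 : 0 < G.outdeg i
    · rw [Mv_eq_outdeg (by omega)]
    · have h0 : G.outdeg i = 0 := by omega
      have hin : ¬ 0 < G.indeg i := fun hi => hne ⟨h0, hi⟩
      unfold Mv
      rw [if_neg (by tauto)]
      omega

lemma onGraph_mkF : (P.mkF).onGraph G := by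
  constructor
  · intro j i
    constructor
    · intro hp
      obtain ⟨x, hb, hstep, hlt⟩ := P.witness (show Arc G j i true from hp)
      refine ⟨x, ?_, ?_, ?_⟩
      · rw [P.mem_mkF]; exact hb
      · show x j + 1 ∈ Finset.Icc (0:ℤ) ((Mv G j : ℤ))
        rw [Finset.mem_Icc]
        have := (hb j).1
        omega
      · exact hlt
    · rintro ⟨x, hx, hx1, hlt⟩
      exact (P.structural j i x).1 hlt
  · intro j i
    constructor
    · intro hp
      obtain ⟨x, hb, hstep, hlt⟩ := P.witness (show Arc G j i false from hp)
      refine ⟨x, ?_, ?_, ?_⟩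
      · rw [P.mem_mkF]; exact hb
      · show x j + 1 ∈ Finset.Icc (0:ℤ) ((Mv G j : ℤ))
        rw [Finset.mem_Icc]
        have := (hb j).1
        omega
      · exact hlt
    · rintro ⟨x, hx, hx1, hlt⟩
      exact (P.structural j i x).2 hlt

lemma converge_mkF : ∀ x, (P.mkF).mem x → (P.mkF).f^[n+1] x = fun i => P.σv i := by
  intro x _
  funext i
  have : (P.mkF).f = fun z j => P.fF j z := rfl
  rw [this]
  exact P.settle x (P.rank i) i rfl (n+1) (P.rank_le i)

end Plan

end Assemble

section Exists

variable {G : SDigraph (Fin n)}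

/-- `A` is closed under in-neighbours. -/
def Cl (G : SDigraph (Fin n)) (A : Finset (Fin n)) : Prop :=
  ∀ x ∈ A, ∀ c s, Arc G c x s → c ∈ A

lemma exists_min_closed {C : Finset (Fin n)} (hCne : C.Nonempty) (hCl : Cl G C) :
    ∃ K : Finset (Fin n), K ⊆ C ∧ K.Nonempty ∧ Cl G K ∧
      (∀ b ∈ K, ∀ z ∈ K, SDigraph.Reach G z b) := by
  classical
  set 𝒮 : Finset (Finset (Fin n)) :=
    Finset.univ.filter (fun A => A ⊆ C ∧ A.Nonempty ∧ Cl G A) with h𝒮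
  have hCS : C ∈ 𝒮 := by
    rw [h𝒮, Finset.mem_filter]
    exact ⟨Finset.mem_univ _, subset_refl _, hCne, hCl⟩
  obtain ⟨K, hK𝒮, hKmin⟩ := Finset.exists_min_image 𝒮 Finset.card ⟨C, hCS⟩
  rw [h𝒮, Finset.mem_filter] at hK𝒮
  obtain ⟨-, hKC, hKne, hKCl⟩ := hK𝒮
  refine ⟨K, hKC, hKne, hKCl, ?_⟩
  intro b hb z hz
  set A := K.filter (fun z => SDigraph.Reach G z b) with hA
  have hAS : A ∈ 𝒮 := by
    rw [h𝒮, Finset.mem_filter]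
    refine ⟨Finset.mem_univ _, ?_, ⟨b, ?_⟩, ?_⟩
    · exact (Finset.filter_subset _ _).trans hKC
    · rw [hA, Finset.mem_filter]
      exact ⟨hb, Relation.ReflTransGen.refl⟩
    · intro y hy c s hcs
      rw [hA, Finset.mem_filter] at hy ⊢
      exact ⟨hKCl y hy.1 c s hcs, Relation.ReflTransGen.head (arc_of_Arc hcs) hy.2⟩
  have hsub : A ⊆ K := Finset.filter_subset _ _
  have hcard : K.card ≤ A.card := hKmin A hAS
  have hEq : A = K := Finset.eq_of_subset_of_card_le hsub hcard
  have : z ∈ A := by rw [hEq]; exact hz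
  rw [hA, Finset.mem_filter] at this
  exact this.2

lemma out_unique {u : Fin n} (h1 : G.outdeg u ≤ 1) {y y' : Fin n} {s s' : Bool}
    (a1 : Arc G u y s) (a2 : Arc G u y' s') : y = y' ∧ s = s' := by
  by_contra hne
  have h2 : 2 ≤ G.outdeg u := by
    cases s <;> cases s'
    · have hyy : y ≠ y' := fun h => hne ⟨h, rfl⟩
      have := le_outdeg G u ∅ {y, y'} (by simp)
        (by
          intro b hb
          rcases Finset.mem_insert.mp hb with rfl | hb
          · exact a1
          · rw [Finset.mem_singleton.mp hb]; exact a2)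
      rw [Finset.card_insert_of_notMem (by simpa using hyy)] at this
      simpa using this
    · have := le_outdeg G u {y'} {y}
        (by intro a ha; rw [Finset.mem_singleton.mp ha]; exact a2)
        (by intro b hb; rw [Finset.mem_singleton.mp hb]; exact a1)
      simpa using this
    · have := le_outdeg G u {y} {y'}
        (by intro a ha; rw [Finset.mem_singleton.mp ha]; exact a1)
        (by intro b hb; rw [Finset.mem_singleton.mp hb]; exact a2)
      simpa using this
    · have hyy : y ≠ y' := fun h => hne ⟨h, rfl⟩
      have := le_outdeg G u {y, y'} ∅
        (by
          intro a ha
          rcases Finset.mem_insert.mp ha with rfl | ha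
          · exact a1
          · rw [Finset.mem_singleton.mp ha]; exact a2)
        (by simp)
      rw [Finset.card_insert_of_notMem (by simpa using hyy)] at this
      simpa using this
  omega

/-- the stuck case: if some in-closed set has no high-outdegree vertex, `G` is a signed cycle. -/
lemma stuck_contra (hconn : SDigraph.Connected G)
    (hnc : ¬ SDigraph.IsSignedCycleGraph G)
    (K : Finset (Fin n)) (hKne : K.Nonempty) (hKCl : Cl G K)
    (hin : ∀ x ∈ K, ∃ c s, Arc G c x s)
    (hno : ∀ u ∈ K, (∃ w s, w ∈ K ∧ Arc G u w s) → G.outdeg u ≤ 1) : False := by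
  classical
  -- choose an in-arc for each element of K
  have hτ : ∀ x : Fin n, x ∈ K → ∃ c s, Arc G c x s ∧ c ∈ K := by
    intro x hx
    obtain ⟨c, s, hcs⟩ := hin x hx
    exact ⟨c, s, hcs, hKCl x hx c s hcs⟩
  set τ : Fin n → Fin n := fun x =>
    if h : x ∈ K then (hτ x h).choose else x with hτdef
  have hτspec : ∀ x ∈ K, (∃ s, Arc G (τ x) x s) ∧ τ x ∈ K := by
    intro x hx
    rw [hτdef]
    simp only [dif_pos hx]
    obtain ⟨s, hs, hmem⟩ := (hτ x hx).choose_spec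
    exact ⟨⟨s, hs⟩, hmem⟩
  have hτdeg : ∀ x ∈ K, G.outdeg (τ x) ≤ 1 := by
    intro x hx
    obtain ⟨⟨s, hs⟩, hmem⟩ := hτspec x hx
    exact hno (τ x) hmem ⟨x, s, hx, hs⟩
  -- τ is injective on K
  have hτinj : ∀ x ∈ K, ∀ y ∈ K, τ x = τ y → x = y := by
    intro x hx y hy hxy
    obtain ⟨⟨s, hs⟩, _⟩ := hτspec x hx
    obtain ⟨⟨s', hs'⟩, _⟩ := hτspec y hy
    rw [hxy] at hs
    exact (out_unique (hτdeg y hy) hs hs').1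
  -- hence surjective onto K
  have himg : K.image τ = K := by
    apply Finset.eq_of_subset_of_card_le
    · intro u hu
      obtain ⟨x, hx, rfl⟩ := Finset.mem_image.mp hu
      exact (hτspec x hx).2
    · rw [Finset.card_image_of_injOn hτinj]
  have hsurj : ∀ u ∈ K, ∃ x ∈ K, τ x = u := by
    intro u hu
    rw [← himg] at hu
    obtain ⟨x, hx, hxe⟩ := Finset.mem_image.mp hu
    exact ⟨x, hx, hxe⟩
  -- every element of K has outdegree ≤ 1 and a unique out-arc into K
  have huniq : ∀ u ∈ K, ∃ x ∈ K, (∃ s, Arc G u x s) ∧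
      (∀ y s, Arc G u y s → y = x) ∧ G.outdeg u ≤ 1 := by
    intro u hu
    obtain ⟨x, hx, rfl⟩ := hsurj u hu
    obtain ⟨⟨s, hs⟩, _⟩ := hτspec x hx
    refine ⟨x, hx, ⟨s, hs⟩, ?_, hτdeg x hx⟩
    intro y t hyt
    exact (out_unique (hτdeg x hx) hyt hs).1
  -- K is the whole vertex set
  have hKuniv : ∀ b : Fin n, b ∈ K := by
    obtain ⟨a, ha⟩ := hKne
    intro b
    have hpath := hconn a b
    induction hpath with
    | refl => exact ha
    | tail hpre hrel ih =>
      rcases hrel with h1 | h2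
      · obtain ⟨s, hs⟩ := arc_iff_Arc.mp h1
        obtain ⟨x, hxK, -, huni, -⟩ := huniq _ ih
        rw [huni _ s hs]
        exact hxK
      · obtain ⟨s, hs⟩ := arc_iff_Arc.mp h2
        exact hKCl _ ih _ s hs
  -- build the signed cycle structure
  apply hnc
  obtain ⟨a0, ha0⟩ := hKne
  refine ⟨?_, hconn, ?_, ?_, ?_⟩
  · exact Fintype.card_pos_iff.mpr ⟨a0⟩
  · intro a b hab
    obtain ⟨x, hx, _, _, hdeg⟩ := huniq a (hKuniv a)
    have := two_le_outdeg_of_double hab.1 hab.2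
    omega
  · intro u
    obtain ⟨x, hx, ⟨s, hs⟩, huni, _⟩ := huniq u (hKuniv u)
    unfold SDigraph.underOutdeg
    rw [show (Finset.univ.filter fun j => G.arc u j) = {x} from ?_, Finset.card_singleton]
    ext v
    simp only [Finset.mem_filter, Finset.mem_univ, true_and, Finset.mem_singleton]
    constructor
    · intro hv
      obtain ⟨t, ht⟩ := arc_iff_Arc.mp hv
      exact huni v t ht
    · intro hv
      rw [hv]
      exact arc_of_Arc hs
  · intro x
    obtain ⟨c, s, hcs, hcK⟩ := hτ x (hKuniv x)
    unfold SDigraph.underIndeg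
    rw [show (Finset.univ.filter fun j => G.arc j x) = {c} from ?_, Finset.card_singleton]
    ext v
    simp only [Finset.mem_filter, Finset.mem_univ, true_and, Finset.mem_singleton]
    constructor
    · intro hv
      obtain ⟨t, ht⟩ := arc_iff_Arc.mp hv
      obtain ⟨z, hz, rfl⟩ := hsurj v (hKuniv v)
      obtain ⟨⟨t', ht'⟩, -⟩ := hτspec z hz
      have hzx : z = x := (out_unique (hτdeg z hz) ht' ht).1
      obtain ⟨z', hz', rfl⟩ := hsurj c hcK
      obtain ⟨⟨t'', ht''⟩, -⟩ := hτspec z' hz'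
      have hzx' : z' = x := (out_unique (hτdeg z' hz') ht'' hcs).1
      rw [hzx, hzx']
    · intro hv
      rw [hv]
      exact arc_of_Arc hcs

end Exists


section Induction

variable {G : SDigraph (Fin n)}

/-- Partial plan on a covered set `S`. -/
structure PrePlan (G : SDigraph (Fin n)) (S : Finset (Fin n)) where
  kind : Fin n → PK n
  rank : Fin n → ℕ
  rank_one : ∀ i, 1 ≤ rank i
  rank_le : ∀ i ∈ S, rank i ≤ S.card + 1
  hroot : ∀ i ∈ S, kind i = PK.root → ∀ j s, ¬ Arc G j i s
  hnor : ∀ i ∈ S, ∀ p ps, kind i = PK.nor p ps → Arc G p i ps ∧ p ∈ S ∧ rank p < rank i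
  hgad2 : ∀ i ∈ S, ∀ u w, kind i = PK.gad u w → 2 ≤ rank i
  hwin : ∀ i ∈ S, ∀ u, kind i = PK.gad u true → G.pos u i = true ∧ G.neg u i = true
  hsingle : ∀ i ∈ S, ∀ u, kind i = PK.gad u false →
      (G.pos u i = true ∨ G.neg u i = true) ∧
      ¬ (G.pos u i = true ∧ G.neg u i = true) ∧ 2 ≤ G.outdeg u
  hcompat : ∀ i ∈ S, ∀ i' ∈ S, ∀ u w w',
      kind i = PK.gad u w → kind i' = PK.gad u w' → w = w'
  hreach : ∀ i ∈ S, ∀ u w, kind i = PK.gad u w → SDigraph.Reach G i u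

/-- conversion once everything is covered -/
def PrePlan.toPlan (pp : PrePlan G Finset.univ) : Plan G where
  kind := pp.kind
  rank := pp.rank
  rank_one := pp.rank_one
  rank_le := by
    intro i
    have := pp.rank_le i (Finset.mem_univ i)
    simpa using this
  hroot := fun i => pp.hroot i (Finset.mem_univ i)
  hnor := fun i p ps h => ⟨(pp.hnor i (Finset.mem_univ i) p ps h).1,
    (pp.hnor i (Finset.mem_univ i) p ps h).2.2⟩
  hgad2 := fun i => pp.hgad2 i (Finset.mem_univ i)
  hwin := fun i => pp.hwin i (Finset.mem_univ i)
  hsingle := fun i => pp.hsingle i (Finset.mem_univ i)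
  hcompat := fun i i' => pp.hcompat i (Finset.mem_univ i) i' (Finset.mem_univ i')

lemma card_sdiff_insert {m : ℕ} {x : Fin n} {S : Finset (Fin n)} (hx : x ∉ S)
    (h : (Finset.univ \ S).card = m + 1) : (Finset.univ \ insert x S).card = m := by
  have h1 : Finset.univ \ insert x S = (Finset.univ \ S).erase x := by
    ext y
    simp only [Finset.mem_sdiff, Finset.mem_erase, Finset.mem_insert, Finset.mem_univ,
      true_and]
    tauto
  rw [h1, Finset.card_erase_of_mem (by simp [Finset.mem_sdiff, hx]), h]
  omega

lemma extend (hconn : SDigraph.Connected G) (hnc : ¬ SDigraph.IsSignedCycleGraph G) :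
    ∀ m : ℕ, ∀ S : Finset (Fin n), (Finset.univ \ S).card = m → PrePlan G S →
      Nonempty (Plan G) := by
  intro m
  induction m with
  | zero =>
    intro S hS pp
    have hCe : Finset.univ \ S = ∅ := Finset.card_eq_zero.mp hS
    have hSu : S = Finset.univ := by
      apply Finset.eq_univ_of_forall
      intro x
      by_contra hx
      have : x ∈ Finset.univ \ S := Finset.mem_sdiff.mpr ⟨Finset.mem_univ x, hx⟩
      rw [hCe] at this
      exact absurd this (Finset.notMem_empty x)
    subst hSu
    exact ⟨pp.toPlan⟩
  | succ m ih =>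
    intro S hS pp
    by_cases hC1 : ∃ x, x ∉ S ∧ ∀ j s, ¬ Arc G j x s
    · obtain ⟨x, hxS, hxin⟩ := hC1
      have hcard : (Finset.univ \ insert x S).card = m :=
        card_sdiff_insert hxS hS
      apply ih (insert x S) hcard
      refine ⟨fun i => if i = x then PK.root else pp.kind i,
        fun i => if i = x then 1 else pp.rank i, ?_, ?_, ?_, ?_, ?_, ?_, ?_, ?_, ?_⟩
      · intro i
        split
        · omega
        · exact pp.rank_one i
      · intro i hi
        have hcS : (insert x S).card = S.card + 1 := Finset.card_insert_of_notMem hxS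
        rcases Finset.mem_insert.mp hi with rfl | hiS
        · rw [if_pos rfl]; omega
        · have hne : i ≠ x := fun h => hxS (h ▸ hiS)
          rw [if_neg hne]
          have := pp.rank_le i hiS
          omega
      · intro i hi hk j s
        rcases Finset.mem_insert.mp hi with rfl | hiS
        · exact hxin j s
        · have hne : i ≠ x := fun h => hxS (h ▸ hiS)
          rw [if_neg hne] at hk
          exact pp.hroot i hiS hk j s
      · intro i hi p ps hk
        rcases Finset.mem_insert.mp hi with rfl | hiS
        · rw [if_pos rfl] at hk
          exact absurd hk (fun h => nomatch h)
        · have hne : i ≠ x := fun h => hxS (h ▸ hiS)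
          rw [if_neg hne] at hk
          obtain ⟨h1, h2, h3⟩ := pp.hnor i hiS p ps hk
          have hpne : p ≠ x := fun h => hxS (h ▸ h2)
          refine ⟨h1, Finset.mem_insert_of_mem h2, ?_⟩
          rw [if_neg hpne, if_neg hne]
          exact h3
      · intro i hi u w hk
        rcases Finset.mem_insert.mp hi with rfl | hiS
        · rw [if_pos rfl] at hk
          exact absurd hk (fun h => nomatch h)
        · have hne : i ≠ x := fun h => hxS (h ▸ hiS)
          rw [if_neg hne] at hk ⊢
          exact pp.hgad2 i hiS u w hk
      · intro i hi u hk
        rcases Finset.mem_insert.mp hi with rfl | hiS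
        · rw [if_pos rfl] at hk
          exact absurd hk (fun h => nomatch h)
        · have hne : i ≠ x := fun h => hxS (h ▸ hiS)
          rw [if_neg hne] at hk
          exact pp.hwin i hiS u hk
      · intro i hi u hk
        rcases Finset.mem_insert.mp hi with rfl | hiS
        · rw [if_pos rfl] at hk
          exact absurd hk (fun h => nomatch h)
        · have hne : i ≠ x := fun h => hxS (h ▸ hiS)
          rw [if_neg hne] at hk
          exact pp.hsingle i hiS u hk
      · intro i hi i' hi' u w w' hk hk'
        rcases Finset.mem_insert.mp hi with rfl | hiS
        · rw [if_pos rfl] at hk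
          exact absurd hk (fun h => nomatch h)
        · rcases Finset.mem_insert.mp hi' with rfl | hiS'
          · rw [if_pos rfl] at hk'
            exact absurd hk' (fun h => nomatch h)
          · have hne : i ≠ x := fun h => hxS (h ▸ hiS)
            have hne' : i' ≠ x := fun h => hxS (h ▸ hiS')
            rw [if_neg hne] at hk
            rw [if_neg hne'] at hk'
            exact pp.hcompat i hiS i' hiS' u w w' hk hk'
      · intro i hi u w hk
        rcases Finset.mem_insert.mp hi with rfl | hiS
        · rw [if_pos rfl] at hk
          exact absurd hk (fun h => nomatch h)
        · have hne : i ≠ x := fun h => hxS (h ▸ hiS)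
          rw [if_neg hne] at hk
          exact pp.hreach i hiS u w hk
    · by_cases hC2 : ∃ x p s, x ∉ S ∧ p ∈ S ∧ Arc G p x s
      · obtain ⟨x, p0, s0, hxS, hp0S, harc0⟩ := hC2
        have hcard : (Finset.univ \ insert x S).card = m :=
          card_sdiff_insert hxS hS
        apply ih (insert x S) hcard
        refine ⟨fun i => if i = x then PK.nor p0 s0 else pp.kind i,
          fun i => if i = x then pp.rank p0 + 1 else pp.rank i, ?_, ?_, ?_, ?_, ?_, ?_, ?_, ?_, ?_⟩
        · intro i
          split
          · omega
          · exact pp.rank_one i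
        · intro i hi
          have hcS : (insert x S).card = S.card + 1 := Finset.card_insert_of_notMem hxS
          have hp0 := pp.rank_le p0 hp0S
          rcases Finset.mem_insert.mp hi with rfl | hiS
          · rw [if_pos rfl]; omega
          · have hne : i ≠ x := fun h => hxS (h ▸ hiS)
            rw [if_neg hne]
            have := pp.rank_le i hiS
            omega
        · intro i hi hk j s
          rcases Finset.mem_insert.mp hi with rfl | hiS
          · rw [if_pos rfl] at hk
            exact absurd hk (fun h => nomatch h)
          · have hne : i ≠ x := fun h => hxS (h ▸ hiS)
            rw [if_neg hne] at hk
            exact pp.hroot i hiS hk j s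
        · intro i hi p ps hk
          rcases Finset.mem_insert.mp hi with rfl | hiS
          · rw [if_pos rfl] at hk
            injection hk with h1 h2
            subst h1
            subst h2
            have hp0ne : p0 ≠ i := fun h => hxS (h ▸ hp0S)
            refine ⟨harc0, Finset.mem_insert_of_mem hp0S, ?_⟩
            rw [if_neg hp0ne, if_pos rfl]
            omega
          · have hne : i ≠ x := fun h => hxS (h ▸ hiS)
            rw [if_neg hne] at hk
            obtain ⟨h1, h2, h3⟩ := pp.hnor i hiS p ps hk
            have hpne : p ≠ x := fun h => hxS (h ▸ h2)
            refine ⟨h1, Finset.mem_insert_of_mem h2, ?_⟩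
            rw [if_neg hpne, if_neg hne]
            exact h3
        · intro i hi u w hk
          rcases Finset.mem_insert.mp hi with rfl | hiS
          · rw [if_pos rfl] at hk
            exact absurd hk (fun h => nomatch h)
          · have hne : i ≠ x := fun h => hxS (h ▸ hiS)
            rw [if_neg hne] at hk ⊢
            exact pp.hgad2 i hiS u w hk
        · intro i hi u hk
          rcases Finset.mem_insert.mp hi with rfl | hiS
          · rw [if_pos rfl] at hk
            exact absurd hk (fun h => nomatch h)
          · have hne : i ≠ x := fun h => hxS (h ▸ hiS)
            rw [if_neg hne] at hk
            exact pp.hwin i hiS u hk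
        · intro i hi u hk
          rcases Finset.mem_insert.mp hi with rfl | hiS
          · rw [if_pos rfl] at hk
            exact absurd hk (fun h => nomatch h)
          · have hne : i ≠ x := fun h => hxS (h ▸ hiS)
            rw [if_neg hne] at hk
            exact pp.hsingle i hiS u hk
        · intro i hi i' hi' u w w' hk hk'
          rcases Finset.mem_insert.mp hi with rfl | hiS
          · rw [if_pos rfl] at hk
            exact absurd hk (fun h => nomatch h)
          · rcases Finset.mem_insert.mp hi' with rfl | hiS'
            · rw [if_pos rfl] at hk'
              exact absurd hk' (fun h => nomatch h)
            · have hne : i ≠ x := fun h => hxS (h ▸ hiS)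
              have hne' : i' ≠ x := fun h => hxS (h ▸ hiS')
              rw [if_neg hne] at hk
              rw [if_neg hne'] at hk'
              exact pp.hcompat i hiS i' hiS' u w w' hk hk'
        · intro i hi u w hk
          rcases Finset.mem_insert.mp hi with rfl | hiS
          · rw [if_pos rfl] at hk
            exact absurd hk (fun h => nomatch h)
          · have hne : i ≠ x := fun h => hxS (h ▸ hiS)
            rw [if_neg hne] at hk
            exact pp.hreach i hiS u w hk
      · -- stuck case: find a gadget
        have hSreach : ∀ a ∈ S, ∀ b, SDigraph.Reach G a b → b ∈ S := by
          intro a ha b hab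
          induction hab with
          | refl => exact ha
          | tail hpre hrel ihr =>
            obtain ⟨s, hs⟩ := arc_iff_Arc.mp hrel
            by_contra hcS
            exact hC2 ⟨_, _, s, hcS, ihr, hs⟩
        have hCne : (Finset.univ \ S).Nonempty := by
          rw [← Finset.card_pos, hS]
          omega
        have hClC : Cl G (Finset.univ \ S) := by
          intro y hy c s hcs
          rw [Finset.mem_sdiff] at hy ⊢
          refine ⟨Finset.mem_univ _, ?_⟩
          intro hcS
          exact hC2 ⟨y, c, s, hy.2, hcS, hcs⟩
        have hinC : ∀ y ∈ Finset.univ \ S, ∃ c s, Arc G c y s := by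
          intro y hy
          rw [Finset.mem_sdiff] at hy
          by_contra hno
          push_neg at hno
          exact hC1 ⟨y, hy.2, fun j s hjs => hno j s hjs⟩
        obtain ⟨K, hKC, hKne, hKCl, hKstrong⟩ := exists_min_closed hCne hClC
        by_cases hu : ∃ u w s, u ∈ K ∧ w ∈ K ∧ Arc G u w s ∧ 2 ≤ G.outdeg u
        · obtain ⟨u, w, su, huK, hwK, harcu, hdegu⟩ := hu
          have hwC : w ∈ Finset.univ \ S := hKC hwK
          have hwS : w ∉ S := (Finset.mem_sdiff.mp hwC).2
          have huC : u ∈ Finset.univ \ S := hKC huK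
          have huS : u ∉ S := (Finset.mem_sdiff.mp huC).2
          set win : Bool := G.pos u w && G.neg u w with hwindef
          have hcard : (Finset.univ \ insert w S).card = m :=
            card_sdiff_insert hwS hS
          apply ih (insert w S) hcard
          refine ⟨fun i => if i = w then PK.gad u win else pp.kind i,
            fun i => if i = w then 2 else pp.rank i, ?_, ?_, ?_, ?_, ?_, ?_, ?_, ?_, ?_⟩
          · intro i
            split
            · omega
            · exact pp.rank_one i
          · intro i hi
            have hcS : (insert w S).card = S.card + 1 := Finset.card_insert_of_notMem hwS
            rcases Finset.mem_insert.mp hi with rfl | hiS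
            · rw [if_pos rfl]; omega
            · have hne : i ≠ w := fun h => hwS (h ▸ hiS)
              rw [if_neg hne]
              have := pp.rank_le i hiS
              omega
          · intro i hi hk j s
            rcases Finset.mem_insert.mp hi with rfl | hiS
            · rw [if_pos rfl] at hk
              exact absurd hk (fun h => nomatch h)
            · have hne : i ≠ w := fun h => hwS (h ▸ hiS)
              rw [if_neg hne] at hk
              exact pp.hroot i hiS hk j s
          · intro i hi p ps hk
            rcases Finset.mem_insert.mp hi with rfl | hiS
            · rw [if_pos rfl] at hk
              exact absurd hk (fun h => nomatch h)
            · have hne : i ≠ w := fun h => hwS (h ▸ hiS)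
              rw [if_neg hne] at hk
              obtain ⟨h1, h2, h3⟩ := pp.hnor i hiS p ps hk
              have hpne : p ≠ w := fun h => hwS (h ▸ h2)
              refine ⟨h1, Finset.mem_insert_of_mem h2, ?_⟩
              rw [if_neg hpne, if_neg hne]
              exact h3
          · intro i hi u' w' hk
            rcases Finset.mem_insert.mp hi with rfl | hiS
            · rw [if_pos rfl]
            · have hne : i ≠ w := fun h => hwS (h ▸ hiS)
              rw [if_neg hne] at hk ⊢
              exact pp.hgad2 i hiS u' w' hk
          · intro i hi u' hk
            rcases Finset.mem_insert.mp hi with rfl | hiS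
            · rw [if_pos rfl] at hk
              injection hk with h1 h2
              subst h1
              have hwin : win = true := h2
              rw [hwindef] at hwin
              exact ⟨(Bool.and_eq_true_iff.mp hwin).1, (Bool.and_eq_true_iff.mp hwin).2⟩
            · have hne : i ≠ w := fun h => hwS (h ▸ hiS)
              rw [if_neg hne] at hk
              exact pp.hwin i hiS u' hk
          · intro i hi u' hk
            rcases Finset.mem_insert.mp hi with rfl | hiS
            · rw [if_pos rfl] at hk
              injection hk with h1 h2
              subst h1
              have hwin : win = false := h2
              rw [hwindef] at hwin
              refine ⟨?_, ?_, hdegu⟩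
              · cases su
                · exact Or.inr harcu
                · exact Or.inl harcu
              · intro hand
                rw [Bool.and_eq_false_iff] at hwin
                rcases hwin with h | h
                · rw [hand.1] at h; exact Bool.noConfusion h
                · rw [hand.2] at h; exact Bool.noConfusion h
            · have hne : i ≠ w := fun h => hwS (h ▸ hiS)
              rw [if_neg hne] at hk
              exact pp.hsingle i hiS u' hk
          · intro i hi i' hi' u'' w1 w2 hk hk'
            -- a gadget source occurring in `S` would have to be in `S`, but `u ∈ K`
            have hold : ∀ i0, i0 ∈ S → pp.kind i0 = PK.gad u w1 → False := by
              intro i0 hi0 hk0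
              have : u ∈ S := hSreach i0 hi0 u (pp.hreach i0 hi0 u w1 hk0)
              exact huS this
            rcases Finset.mem_insert.mp hi with rfl | hiS
            · rw [if_pos rfl] at hk
              injection hk with h1 h2
              subst h1
              rcases Finset.mem_insert.mp hi' with rfl | hiS'
              · rw [if_pos rfl] at hk'
                injection hk' with h3 h4
                rw [← h2, ← h4]
              · have hne' : i' ≠ i := fun h => hwS (h ▸ hiS')
                rw [if_neg hne'] at hk'
                have : u ∈ S := hSreach i' hiS' u (pp.hreach i' hiS' u w2 hk')
                exact absurd this huS
            · rcases Finset.mem_insert.mp hi' with rfl | hiS'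
              · rw [if_pos rfl] at hk'
                injection hk' with h3 h4
                subst h3
                have hne : i ≠ i' := fun h => hwS (h ▸ hiS)
                rw [if_neg hne] at hk
                have : u ∈ S := hSreach i hiS u (pp.hreach i hiS u w1 hk)
                exact absurd this huS
              · have hne : i ≠ w := fun h => hwS (h ▸ hiS)
                have hne' : i' ≠ w := fun h => hwS (h ▸ hiS')
                rw [if_neg hne] at hk
                rw [if_neg hne'] at hk'
                exact pp.hcompat i hiS i' hiS' u'' w1 w2 hk hk'
          · intro i hi u' w' hk
            rcases Finset.mem_insert.mp hi with rfl | hiS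
            · rw [if_pos rfl] at hk
              injection hk with h1 h2
              subst h1
              exact hKstrong u huK i hwK
            · have hne : i ≠ w := fun h => hwS (h ▸ hiS)
              rw [if_neg hne] at hk
              exact pp.hreach i hiS u' w' hk
        · exfalso
          apply stuck_contra hconn hnc K hKne hKCl
          · intro y hy
            exact hinC y (hKC hy)
          · intro u' hu' hex
            by_contra hdeg
            obtain ⟨w', s', hw', harc'⟩ := hex
            exact hu ⟨u', w', s', hu', hw', harc', by omega⟩

end Induction


/-- Existence of a plan. -/
lemma plan_exists (G : SDigraph (Fin n)) (hconn : SDigraph.Connected G)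
    (hnc : ¬ SDigraph.IsSignedCycleGraph G) : Nonempty (Plan G) := by
  apply extend hconn hnc (Finset.univ \ (∅ : Finset (Fin n))).card ∅ rfl
  exact ⟨fun _ => PK.root, fun _ => 1, fun _ => le_refl 1,
    fun i hi => absurd hi (Finset.notMem_empty i),
    fun i hi => absurd hi (Finset.notMem_empty i),
    fun i hi => absurd hi (Finset.notMem_empty i),
    fun i hi => absurd hi (Finset.notMem_empty i),
    fun i hi => absurd hi (Finset.notMem_empty i),
    fun i hi => absurd hi (Finset.notMem_empty i),
    fun i hi => absurd hi (Finset.notMem_empty i),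
    fun i hi => absurd hi (Finset.notMem_empty i)⟩


end S0

/-- If `G` is a connected signed digraph with `n` vertices that is not a
signed cycle, then there exists a degree-bounded FDS `f` on `G` such that `f^(n+1)` is
constant. -/
theorem stmt0 (n : ℕ) (G : SDigraph (Fin n)) (hconn : SDigraph.Connected G)
    (hnc : ¬ SDigraph.IsSignedCycleGraph G) :
    ∃ F : FDS (Fin n), F.onGraph G ∧ F.degreeBounded G ∧
      ∃ c : Fin n → ℤ, ∀ x, F.mem x → F.f^[n + 1] x = c := by
  obtain ⟨P⟩ := S0.plan_exists G hconn hnc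
  exact ⟨P.mkF, P.onGraph_mkF, P.degree_mkF, fun i => P.σv i, P.converge_mkF⟩
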